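/- (Main theorem: survivor criteria) Every survivor n satisfies exactly one of the following: (i) n is prime; (ii) n = p·q where p and q are distinct odd primes; (iii) n = 9. -/
import Mathlib


/-- Sum of the distinct prime divisors of `n`. -/
def primeSum (n : ℕ) : ℕ := ∑ p ∈ n.primeFactors, p

/-- Sum of the positive divisors of `n` which are not prime (including `1`,
and including `n` itself whenever `n` is not prime). -/
def compositeSum (n : ℕ) : ℕ := ∑ d ∈ n.divisors.filter (fun d => ¬ d.Prime), d

/-- The map `X(n) = Π(n) − C(n) + n`, regarded as an integer. -/
def X (n : ℕ) : ℤ := (primeSum n : ℤ) - (compositeSum n : ℤ) + n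

/-- `n` is a survivor if there is a sequence of positive integers starting at `n`
whose successive terms are given by `X`; i.e., all iterates of `X` from `n` stay positive. -/
def Survivor (n : ℕ) : Prop :=
  ∃ a : ℕ → ℕ, a 0 = n ∧ (∀ i, 0 < a i) ∧ ∀ i, (a (i + 1) : ℤ) = X (a i)


lemma divisors_mul_prime {p q : ℕ} (hp : p.Prime) (hq : q.Prime) :
    (p * q).divisors = {1, p, q, p * q} := by
  ext d
  rw [Nat.mem_divisors]
  constructor
  · rintro ⟨hd, -⟩
    rw [Nat.dvd_mul] at hd
    obtain ⟨a, b, ha, hb, rfl⟩ := hd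
    rcases (Nat.Prime.eq_one_or_self_of_dvd hp a ha) with rfl | rfl <;>
      rcases (Nat.Prime.eq_one_or_self_of_dvd hq b hb) with rfl | rfl <;> simp
  · intro hd
    refine ⟨?_, (Nat.mul_pos hp.pos hq.pos).ne'⟩
    simp only [Finset.mem_insert, Finset.mem_singleton] at hd
    rcases hd with rfl | rfl | rfl | rfl
    · exact one_dvd _
    · exact Dvd.intro q rfl
    · exact Dvd.intro_left p rfl
    · exact dvd_rfl

lemma one_lt_mul_prime {p q : ℕ} (hp : p.Prime) (hq : q.Prime) : 1 < p * q :=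
  hp.one_lt.trans_le (Nat.le_mul_of_pos_right _ hq.pos)

lemma compositeSum_pq {p q : ℕ} (hp : p.Prime) (hq : q.Prime) (hne : p ≠ q) :
    compositeSum (p * q) = 1 + p * q := by
  unfold compositeSum
  rw [divisors_mul_prime hp hq]
  have h1 : (({1, p, q, p * q} : Finset ℕ).filter (fun d => ¬ d.Prime)) = {1, p * q} := by
    rw [Finset.filter_insert, Finset.filter_insert, Finset.filter_insert, Finset.filter_singleton]
    simp [hp, hq, Nat.not_prime_one, Nat.not_prime_mul hp.ne_one hq.ne_one]
  rw [h1, Finset.sum_insert (by simp; exact fun h => (one_lt_mul_prime hp hq).ne' h.symm), Finset.sum_singleton]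

lemma compositeSum_sq {p : ℕ} (hp : p.Prime) :
    compositeSum (p * p) = 1 + p * p := by
  unfold compositeSum
  rw [divisors_mul_prime hp hp]
  have h1 : (({1, p, p, p * p} : Finset ℕ).filter (fun d => ¬ d.Prime)) = {1, p * p} := by
    rw [Finset.filter_insert, Finset.filter_insert, Finset.filter_insert, Finset.filter_singleton]
    simp [hp, Nat.not_prime_one, Nat.not_prime_mul hp.ne_one hp.ne_one]
  rw [h1, Finset.sum_insert (by simp; exact fun h => (one_lt_mul_prime hp hp).ne' h.symm), Finset.sum_singleton]

lemma primeSum_pq {p q : ℕ} (hp : p.Prime) (hq : q.Prime) (hne : p ≠ q) :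
    primeSum (p * q) = p + q := by
  unfold primeSum
  rw [Nat.primeFactors_mul hp.ne_zero hq.ne_zero, hp.primeFactors, hq.primeFactors]
  rw [show ({p} ∪ {q} : Finset ℕ) = {p, q} by rfl, Finset.sum_insert (by simp [hne]), Finset.sum_singleton]

lemma primeSum_sq {p : ℕ} (hp : p.Prime) : primeSum (p * p) = p := by
  unfold primeSum
  rw [Nat.primeFactors_mul hp.ne_zero hp.ne_zero, hp.primeFactors]
  simp

lemma X_pq {p q : ℕ} (hp : p.Prime) (hq : q.Prime) (hne : p ≠ q) :
    X (p * q) = (p : ℤ) + q - 1 := by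
  unfold X
  rw [compositeSum_pq hp hq hne, primeSum_pq hp hq hne]
  push_cast
  ring

lemma X_sq {p : ℕ} (hp : p.Prime) : X (p * p) = (p : ℤ) - 1 := by
  unfold X
  rw [compositeSum_sq hp, primeSum_sq hp]
  push_cast
  ring

lemma X_one : X 1 = 0 := by
  unfold X primeSum compositeSum
  rw [Nat.primeFactors_one, Nat.divisors_one]
  rw [Finset.filter_singleton]
  simp [Nat.not_prime_one]

lemma X_nonpos {n : ℕ} (hn : 2 ≤ n) (hnp : ¬ n.Prime) (ht : ¬ (n / n.minFac).Prime) :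
    X n ≤ 0 := by
  set p := n.minFac with hpdef
  have hp : p.Prime := Nat.minFac_prime (by omega)
  have hpd : p ∣ n := Nat.minFac_dvd n
  have hn0 : n ≠ 0 := by omega
  have hpt : p * (n / p) = n := Nat.mul_div_cancel' hpd
  set t := n / p with htdef
  have ht1 : t ≠ 1 := by
    intro h
    rw [h, mul_one] at hpt
    exact hnp (hpt ▸ hp)
  have ht0 : t ≠ 0 := by
    intro h
    rw [h, mul_zero] at hpt
    omega
  have hpmem : p ∈ n.primeFactors := Nat.mem_primeFactors.2 ⟨hp, hpd, hn0⟩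
  by_cases hq : ∃ q ∈ n.primeFactors, q ≠ p
  · -- two distinct primes case
    obtain ⟨q, hqmem, hqne⟩ := hq
    have hqp : q.Prime := (Nat.mem_primeFactors.1 hqmem).1
    set E := n.primeFactors.erase p with hEdef
    have hqE : q ∈ E := Finset.mem_erase.2 ⟨hqne, hqmem⟩
    have hPS : primeSum n = p + ∑ r ∈ E, r := (Finset.add_sum_erase _ id hpmem).symm
    have hsub : insert 1 (insert n (E.image (fun r => p * r))) ⊆
        n.divisors.filter (fun d => ¬ d.Prime) := by
      intro d hd
      simp only [Finset.mem_insert, Finset.mem_image] at hd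
      rcases hd with rfl | rfl | ⟨r, hrE, rfl⟩
      · exact Finset.mem_filter.2 ⟨Nat.mem_divisors.2 ⟨one_dvd _, hn0⟩, Nat.not_prime_one⟩
      · exact Finset.mem_filter.2 ⟨Nat.mem_divisors.2 ⟨dvd_rfl, hn0⟩, hnp⟩
      · have hrmem := Finset.mem_of_mem_erase hrE
        have hr : r.Prime := (Nat.mem_primeFactors.1 hrmem).1
        have hrne : r ≠ p := (Finset.mem_erase.1 hrE).1
        have hdvd : p * r ∣ n :=
          (Nat.Coprime.mul_dvd_of_dvd_of_dvd
            ((Nat.coprime_primes hp hr).2 (Ne.symm hrne)) hpd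
            (Nat.mem_primeFactors.1 hrmem).2.1)
        exact Finset.mem_filter.2 ⟨Nat.mem_divisors.2 ⟨hdvd, hn0⟩,
          Nat.not_prime_mul hp.ne_one hr.ne_one⟩
    have hnimg : n ∉ E.image (fun r => p * r) := by
      intro h
      obtain ⟨r, hrE, hrn⟩ := Finset.mem_image.1 h
      have hr : r.Prime := (Nat.mem_primeFactors.1 (Finset.mem_of_mem_erase hrE)).1
      have : r = t := by
        have := hpt
        rw [← hrn] at this
        exact Nat.eq_of_mul_eq_mul_left hp.pos (by omega)
      exact ht (this ▸ hr)
    have h1i : (1 : ℕ) ∉ insert n (E.image (fun r => p * r)) := by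
      simp only [Finset.mem_insert, Finset.mem_image]
      push_neg
      refine ⟨by omega, fun r hrE => ?_⟩
      have hr : r.Prime := (Nat.mem_primeFactors.1 (Finset.mem_of_mem_erase hrE)).1
      have := one_lt_mul_prime hp hr
      omega
    have hsum : ∑ d ∈ insert 1 (insert n (E.image (fun r => p * r))), d
        = 1 + (n + p * ∑ r ∈ E, r) := by
      rw [Finset.sum_insert h1i, Finset.sum_insert hnimg,
        Finset.sum_image (fun x _ y _ h => Nat.eq_of_mul_eq_mul_left hp.pos h),
        ← Finset.mul_sum]
    have hC : 1 + (n + p * ∑ r ∈ E, r) ≤ compositeSum n := by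
      rw [← hsum]
      exact Finset.sum_le_sum_of_subset hsub
    have hs : 2 ≤ ∑ r ∈ E, r := by
      calc 2 ≤ q := hqp.two_le
      _ ≤ ∑ r ∈ E, r := Finset.single_le_sum (fun i _ => Nat.zero_le i) hqE
    have hp2 : 2 ≤ p := hp.two_le
    unfold X
    rw [hPS]
    have hC' := (Nat.cast_le (α := ℤ)).2 hC
    push_cast
    push_cast at hC'
    nlinarith [hC', (Nat.cast_le (α := ℤ)).2 hs, (Nat.cast_le (α := ℤ)).2 hp2]
  · -- prime power case
    push_neg at hq
    have hPF : n.primeFactors = {p} :=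
      Finset.eq_singleton_iff_unique_mem.2 ⟨hpmem, hq⟩
    have hPS : primeSum n = p := by unfold primeSum; rw [hPF, Finset.sum_singleton]
    -- p ∣ t
    have htm : t.minFac ∣ n := dvd_trans (Nat.minFac_dvd t) ⟨p, by rw [← hpt]; ring⟩
    have htp : t.minFac.Prime := Nat.minFac_prime ht1
    have hpt2 : t.minFac = p := hq _ (Nat.mem_primeFactors.2 ⟨htp, htm, hn0⟩)
    have hppd : p * p ∣ n := by
      rw [← hpt]
      exact mul_dvd_mul_left p (hpt2 ▸ Nat.minFac_dvd t)
    have hppn : p * p ≠ n := by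
      intro h
      rw [← hpt] at h
      have : p = t := Nat.eq_of_mul_eq_mul_left hp.pos h
      exact ht (this ▸ hp)
    have hpplt : p * p < n := lt_of_le_of_ne (Nat.le_of_dvd (by omega) hppd) hppn
    have hpp1 : 1 < p * p := one_lt_mul_prime hp hp
    have hsub : ({1, p * p, n} : Finset ℕ) ⊆ n.divisors.filter (fun d => ¬ d.Prime) := by
      intro d hd
      simp only [Finset.mem_insert, Finset.mem_singleton] at hd
      rcases hd with rfl | rfl | rfl
      · exact Finset.mem_filter.2 ⟨Nat.mem_divisors.2 ⟨one_dvd _, hn0⟩, Nat.not_prime_one⟩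
      · exact Finset.mem_filter.2 ⟨Nat.mem_divisors.2 ⟨hppd, hn0⟩,
          Nat.not_prime_mul hp.ne_one hp.ne_one⟩
      · exact Finset.mem_filter.2 ⟨Nat.mem_divisors.2 ⟨dvd_rfl, hn0⟩, hnp⟩
    have hsum : ∑ d ∈ ({1, p * p, n} : Finset ℕ), d = 1 + (p * p + n) := by
      rw [Finset.sum_insert (by simp; omega), Finset.sum_insert (by simp; omega),
        Finset.sum_singleton]
    have hC : 1 + (p * p + n) ≤ compositeSum n := by
      rw [← hsum]; exact Finset.sum_le_sum_of_subset hsub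
    have hp2 : 2 ≤ p := hp.two_le
    unfold X
    rw [hPS]
    have hC' := (Nat.cast_le (α := ℤ)).2 hC
    push_cast at hC'
    nlinarith [hC', hp2]

lemma survivor_step {n : ℕ} (h : Survivor n) : 0 < X n ∧ Survivor (X n).toNat := by
  obtain ⟨a, h0, hpos, hrec⟩ := h
  have h1 : (a 1 : ℤ) = X n := by rw [hrec 0, h0]
  have hx : 0 < X n := by rw [← h1]; exact_mod_cast hpos 1
  refine ⟨hx, ?_⟩
  have ha1 : a 1 = (X n).toNat := by
    have h2 : ((X n).toNat : ℤ) = (a 1 : ℤ) := by rw [Int.toNat_of_nonneg hx.le, h1]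
    exact_mod_cast h2.symm
  exact ⟨fun i => a (i + 1), ha1, fun i => hpos _, fun i => hrec _⟩

lemma even_not_good {m : ℕ} (hev : Even m) (hm : 4 ≤ m) :
    ¬ m.Prime ∧ (¬ ∃ p q : ℕ, p.Prime ∧ q.Prime ∧ Odd p ∧ Odd q ∧ p ≠ q ∧ m = p * q)
      ∧ m ≠ 9 := by
  refine ⟨fun h => ?_, ?_, fun h => ?_⟩
  · have := (Nat.Prime.even_iff h).1 hev
    omega
  · rintro ⟨a, b, -, -, ha, hb, -, rfl⟩
    exact (Nat.not_odd_iff_even.2 hev) (ha.mul hb)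
  · subst h
    exact (by decide : ¬ Even 9) hev

lemma not_good_one :
    ¬ (1:ℕ).Prime ∧ (¬ ∃ p q : ℕ, p.Prime ∧ q.Prime ∧ Odd p ∧ Odd q ∧ p ≠ q ∧ 1 = p * q)
      ∧ (1:ℕ) ≠ 9 := by
  refine ⟨Nat.not_prime_one, ?_, by norm_num⟩
  rintro ⟨a, b, hap, hbp, -, -, -, h⟩
  exact (one_lt_mul_prime hap hbp).ne' h.symm

lemma not_survivor : ∀ n : ℕ, 0 < n → ¬ n.Prime →
    ¬ (∃ p q : ℕ, p.Prime ∧ q.Prime ∧ Odd p ∧ Odd q ∧ p ≠ q ∧ n = p * q) →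
    n ≠ 9 → ¬ Survivor n := by
  intro n
  induction n using Nat.strong_induction_on with
  | _ n IH =>
  intro hpos hP hQ hR hs
  obtain ⟨hx, hs'⟩ := survivor_step hs
  by_cases hone : n = 1
  · subst hone
    rw [X_one] at hx
    exact lt_irrefl 0 hx
  have hn2 : 2 ≤ n := by omega
  set p := n.minFac with hpdef
  have hp : p.Prime := Nat.minFac_prime hone
  have hpd : p ∣ n := Nat.minFac_dvd n
  have hpt : p * (n / p) = n := Nat.mul_div_cancel' hpd
  set t := n / p with htdef
  have ht1 : t ≠ 1 := by
    intro h
    rw [h, mul_one] at hpt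
    exact hP (hpt ▸ hp)
  have ht0 : t ≠ 0 := by
    intro h
    rw [h, mul_zero] at hpt
    omega
  by_cases htp : t.Prime
  · by_cases hpteq : p = t
    · -- n = p * p
      have hXn : X n = (p : ℤ) - 1 := by
        rw [← hpt, ← hpteq]
        exact X_sq hp
      by_cases hp2 : p = 2
      · -- n = 4, X n = 1
        have hm : (X n).toNat = 1 := by rw [hXn, hp2]; rfl
        rw [hm] at hs'
        have hn4 : n = 4 := by rw [← hpt, ← hpteq, hp2]
        exact IH 1 (by omega) (by omega) not_good_one.1 not_good_one.2.1 not_good_one.2.2 hs'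
      · by_cases hp3 : p = 3
        · -- n = 9
          exact hR (by rw [← hpt, ← hpteq, hp3])
        · -- p ≥ 5
          have hp4 : p ≠ 4 := by
            intro h
            rw [h] at hp
            norm_num at hp
          have hp5 : 5 ≤ p := by
            have := hp.two_le
            omega
          have hm : (X n).toNat = p - 1 := by rw [hXn]; omega
          rw [hm] at hs'
          have hev : Even (p - 1) :=
            Nat.Odd.sub_odd (hp.odd_of_ne_two hp2) odd_one
          have h4 : 4 ≤ p - 1 := by omega
          have hnpp : n = p * p := by rw [← hpt, ← hpteq]
          have hlt : p - 1 < n :=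
            lt_of_lt_of_le (Nat.sub_lt hp.pos one_pos) (hnpp ▸ Nat.le_mul_of_pos_left _ hp.pos)
          obtain ⟨g1, g2, g3⟩ := even_not_good hev h4
          exact IH (p - 1) hlt (by omega) g1 g2 g3 hs'
    · -- n = p * t, distinct primes
      by_cases hp2 : p = 2
      · -- n = 2t, X n = t + 1
        have hXn : X n = (p : ℤ) + t - 1 := by
          rw [← hpt]
          exact X_pq hp htp hpteq
        have ht2 : t ≠ 2 := by omega
        have htodd : Odd t := htp.odd_of_ne_two ht2
        have ht3 : 3 ≤ t := by
          have := htp.two_le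
          omega
        have hm : (X n).toNat = t + 1 := by rw [hXn, hp2]; omega
        rw [hm] at hs'
        have hev : Even (t + 1) := Odd.add_one htodd
        have hn2t : n = 2 * t := by rw [← hpt, hp2]
        have hlt : t + 1 < n := by omega
        obtain ⟨g1, g2, g3⟩ := even_not_good hev (by omega)
        exact IH (t + 1) hlt (by omega) g1 g2 g3 hs'
      · -- p, t odd distinct primes: contradicts hQ
        have hplet : p ≤ t :=
          Nat.minFac_le_of_dvd htp.two_le ⟨p, by rw [← hpt]; ring⟩
        have ht2 : t ≠ 2 := by
          have := hp.two_le
          omega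
        exact hQ ⟨p, t, hp, htp, hp.odd_of_ne_two hp2, htp.odd_of_ne_two ht2,
          hpteq, hpt.symm⟩
  · exact absurd hx (not_lt.2 (X_nonpos hn2 hP htp))

theorem survivor_criteria (n : ℕ) (hn : 0 < n) (hsurv : Survivor n) :
    (n.Prime ∧ ¬ (∃ p q : ℕ, p.Prime ∧ q.Prime ∧ Odd p ∧ Odd q ∧ p ≠ q ∧ n = p * q) ∧
        n ≠ 9) ∨
    (¬ n.Prime ∧ (∃ p q : ℕ, p.Prime ∧ q.Prime ∧ Odd p ∧ Odd q ∧ p ≠ q ∧ n = p * q) ∧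
        n ≠ 9) ∨
    (¬ n.Prime ∧ ¬ (∃ p q : ℕ, p.Prime ∧ q.Prime ∧ Odd p ∧ Odd q ∧ p ≠ q ∧ n = p * q) ∧
        n = 9) := by
  by_cases hP : n.Prime
  · left
    refine ⟨hP, ?_, ?_⟩
    · rintro ⟨p, q, hp, hq, -, -, -, rfl⟩
      exact Nat.not_prime_mul hp.ne_one hq.ne_one hP
    · rintro rfl
      norm_num at hP
  by_cases hQ : ∃ p q : ℕ, p.Prime ∧ q.Prime ∧ Odd p ∧ Odd q ∧ p ≠ q ∧ n = p * q
  · right; left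
    refine ⟨hP, hQ, ?_⟩
    rintro rfl
    obtain ⟨p, q, hp, hq, -, -, hne, h⟩ := hQ
    have h3 : Nat.Prime 3 := by norm_num
    have hp3 : p = 3 := by
      have hpd : p ∣ 3 ^ 2 := ⟨q, by rw [show (3:ℕ)^2 = 9 from rfl, h]⟩
      exact (Nat.prime_dvd_prime_iff_eq hp h3).1 (hp.dvd_of_dvd_pow hpd)
    have hq3 : q = 3 := by
      have hqd : q ∣ 3 ^ 2 := ⟨p, by rw [show (3:ℕ)^2 = 9 from rfl, h]; ring⟩
      exact (Nat.prime_dvd_prime_iff_eq hq h3).1 (hq.dvd_of_dvd_pow hqd)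
    exact hne (hp3.trans hq3.symm)
  by_cases hR : n = 9
  · right; right; exact ⟨hP, hQ, hR⟩
  · exact absurd hsurv (not_survivor n hn hP hQ hR)
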